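/- Let L > 0, let ς_Ne > 0 and ς_Di > 0 be real numbers, and let λ ∈ ℂ. Suppose φ₁, φ₂ : ℝ → ℂ both satisfy the KdV spectral ODE with parameter λ on [0,L], and satisfy the boundary conditions φ₂(0) = φ₁(0), ς_Ne·φ₁''(0) + ς_Di·φ₂''(0) = 0, φ₁(L) = φ₂(L) = 0, φ₁'(0) = φ₂'(0) = 0, φ₁'(L) = 0, and φ₂''(L) = 0. If moreover φ₁''(L) = 0 or φ₁''(0) = φ₂''(0), then φ₁(x) = 0 and φ₂(x) = 0 for all x ∈ [0,L]. -/

import Mathlib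

open Set

def KdVSpectralODE (lam : ℂ) (L : ℝ) (φ : ℝ → ℂ) : Prop :=
  ContDiff ℝ 3 φ ∧
    ∀ x ∈ Set.Icc (0 : ℝ) L, lam * φ x + deriv φ x + iteratedDeriv 3 φ x = 0

section aux
variable (lam : ℂ)

noncomputable def kdvA : (ℂ × ℂ × ℂ) →L[ℝ] (ℂ × ℂ × ℂ) :=
  letI p1 : (ℂ × ℂ × ℂ) →L[ℝ] ℂ := ContinuousLinearMap.fst ℝ ℂ (ℂ × ℂ)
  letI p2 : (ℂ × ℂ × ℂ) →L[ℝ] ℂ :=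
    (ContinuousLinearMap.fst ℝ ℂ ℂ).comp (ContinuousLinearMap.snd ℝ ℂ (ℂ × ℂ))
  p2.prod (((ContinuousLinearMap.snd ℝ ℂ ℂ).comp (ContinuousLinearMap.snd ℝ ℂ (ℂ × ℂ))).prod
    (-(lam • p1 + p2)))

lemma kdvA_apply (p : ℂ × ℂ × ℂ) :
    kdvA lam p = (p.2.1, p.2.2, -(lam * p.1 + p.2.1)) := by
  simp [kdvA, ContinuousLinearMap.prod_apply, smul_eq_mul]

lemma kdv_uniq {L : ℝ} {φ ψ : ℝ → ℂ} (hφ : KdVSpectralODE lam L φ)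
    (hψ : KdVSpectralODE lam L ψ) {x₀ : ℝ} (hx₀ : x₀ ∈ Icc (0:ℝ) L)
    (e0 : φ x₀ = ψ x₀) (e1 : deriv φ x₀ = deriv ψ x₀)
    (e2 : iteratedDeriv 2 φ x₀ = iteratedDeriv 2 ψ x₀) :
    ∀ x ∈ Icc (0:ℝ) L, φ x = ψ x ∧ deriv φ x = deriv ψ x ∧
      iteratedDeriv 2 φ x = iteratedDeriv 2 ψ x := by
  classical
  set F : ℝ → ℂ × ℂ × ℂ := fun t => (φ t, deriv φ t, iteratedDeriv 2 φ t) with hF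
  set G : ℝ → ℂ × ℂ × ℂ := fun t => (ψ t, deriv ψ t, iteratedDeriv 2 ψ t) with hG
  have key : ∀ (f : ℝ → ℂ), KdVSpectralODE lam L f → ∀ t ∈ Icc (0:ℝ) L,
      HasDerivAt (fun s => (f s, deriv f s, iteratedDeriv 2 f s))
        (kdvA lam (f t, deriv f t, iteratedDeriv 2 f t)) t := by
    intro f hf t ht
    have hc : ContDiff ℝ 3 f := hf.1
    have h1 : HasDerivAt f (deriv f t) t :=
      (hc.differentiable (by norm_num)).differentiableAt.hasDerivAt
    have hc1 : ContDiff ℝ 2 (deriv f) := by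
      have := (contDiff_succ_iff_deriv.mp (by exact_mod_cast hc : ContDiff ℝ ((2:ℕ) + 1) f)).2.2
      exact_mod_cast this
    have h2 : HasDerivAt (deriv f) (iteratedDeriv 2 f t) t := by
      have : HasDerivAt (deriv f) (deriv (deriv f) t) t :=
        (hc1.differentiable (by norm_num)).differentiableAt.hasDerivAt
      simpa [iteratedDeriv_succ, iteratedDeriv_one] using this
    have hc2 : ContDiff ℝ 1 (deriv (deriv f)) := by
      have := (contDiff_succ_iff_deriv.mp (by exact_mod_cast hc1 : ContDiff ℝ ((1:ℕ) + 1) (deriv f))).2.2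
      exact_mod_cast this
    have h3 : HasDerivAt (iteratedDeriv 2 f) (-(lam * f t + deriv f t)) t := by
      have h3' : HasDerivAt (deriv (deriv f)) (deriv (deriv (deriv f)) t) t :=
        (hc2.differentiable (by norm_num)).differentiableAt.hasDerivAt
      have heq : deriv (deriv (deriv f)) t = -(lam * f t + deriv f t) := by
        have := hf.2 t ht
        have h3d : iteratedDeriv 3 f t = deriv (deriv (deriv f)) t := by
          simp [iteratedDeriv_succ, iteratedDeriv_one]
        rw [h3d] at this
        linear_combination this
      rw [heq] at h3'
      have : iteratedDeriv 2 f = deriv (deriv f) := by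
        ext s; simp [iteratedDeriv_succ, iteratedDeriv_one]
      rw [this]
      exact h3'
    rw [kdvA_apply]
    exact h1.prodMk (h2.prodMk h3)
  have cont : ∀ (f : ℝ → ℂ), KdVSpectralODE lam L f →
      ContinuousOn (fun t => (f t, deriv f t, iteratedDeriv 2 f t)) (Icc (0:ℝ) L) := by
    intro f hf
    apply ContinuousOn.prodMk (hf.1.continuous.continuousOn)
    apply ContinuousOn.prodMk
    · exact (hf.1.continuous_deriv (by norm_num)).continuousOn
    · have h3 : ContDiff ℝ (((1:ℕ)+(2:ℕ) : ℕ)) f := by exact_mod_cast hf.1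
      exact ((ContDiff.iterate_deriv' 1 2 h3).continuous.continuousOn).congr
        (fun s _ => by simp [iteratedDeriv_succ, iteratedDeriv_one, Function.iterate_succ,
          Function.comp])
  have hv : ∀ t : ℝ, LipschitzOnWith ‖kdvA lam‖₊ (fun p => kdvA lam p)
      ((fun _ : ℝ => (univ : Set (ℂ × ℂ × ℂ))) t) :=
    fun _ => ((kdvA lam).lipschitz).lipschitzOnWith
  have hx0 : F x₀ = G x₀ := by simp only [hF, hG, e0, e1, e2]
  have hright : EqOn F G (Icc x₀ L) := by
    apply ODE_solution_unique_of_mem_Icc_right (fun t _ => hv t)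
      (ContinuousOn.mono (cont φ hφ) (Icc_subset_Icc hx₀.1 le_rfl))
      (fun t ht => ((key φ hφ t ⟨le_trans hx₀.1 ht.1, le_of_lt ht.2⟩).hasDerivWithinAt))
      (fun _ _ => trivial)
      (ContinuousOn.mono (cont ψ hψ) (Icc_subset_Icc hx₀.1 le_rfl))
      (fun t ht => ((key ψ hψ t ⟨le_trans hx₀.1 ht.1, le_of_lt ht.2⟩).hasDerivWithinAt))
      (fun _ _ => trivial) hx0
  have hleft : EqOn F G (Icc 0 x₀) := by
    apply ODE_solution_unique_of_mem_Icc_left (fun t _ => hv t)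
      (ContinuousOn.mono (cont φ hφ) (Icc_subset_Icc le_rfl hx₀.2))
      (fun t ht => ((key φ hφ t ⟨le_of_lt ht.1, le_trans ht.2 hx₀.2⟩).hasDerivWithinAt))
      (fun _ _ => trivial)
      (ContinuousOn.mono (cont ψ hψ) (Icc_subset_Icc le_rfl hx₀.2))
      (fun t ht => ((key ψ hψ t ⟨le_of_lt ht.1, le_trans ht.2 hx₀.2⟩).hasDerivWithinAt))
      (fun _ _ => trivial) hx0
  intro x hx
  have hFG : F x = G x := by
    rcases le_total x x₀ with h | h
    · exact hleft ⟨hx.1, h⟩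
    · exact hright ⟨h, hx.2⟩
  simp only [hF, hG, Prod.mk.injEq] at hFG
  exact ⟨hFG.1, hFG.2.1, hFG.2.2⟩

lemma kdv_zero (L : ℝ) : KdVSpectralODE lam L (fun _ => (0:ℂ)) := by
  refine ⟨contDiff_const, fun x _ => ?_⟩
  simp [iteratedDeriv_succ]

lemma kdv_vanish {L : ℝ} {φ : ℝ → ℂ} (hφ : KdVSpectralODE lam L φ) {x₀ : ℝ}
    (hx₀ : x₀ ∈ Icc (0:ℝ) L) (e0 : φ x₀ = 0) (e1 : deriv φ x₀ = 0)
    (e2 : iteratedDeriv 2 φ x₀ = 0) :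
    ∀ x ∈ Icc (0:ℝ) L, φ x = 0 ∧ deriv φ x = 0 ∧ iteratedDeriv 2 φ x = 0 := by
  have h := kdv_uniq lam hφ (kdv_zero lam L) hx₀ (by simpa using e0)
    (by simpa using e1) (by simp only [iteratedDeriv_succ, iteratedDeriv_zero] at e2 ⊢; simpa using e2)
  intro x hx
  have := h x hx
  simpa [iteratedDeriv_succ] using this

end aux

theorem stmt1 (L : ℝ) (hL : 0 < L) (ςNe ςDi : ℝ) (hNe : 0 < ςNe) (hDi : 0 < ςDi)
    (lam : ℂ) (φ₁ φ₂ : ℝ → ℂ)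
    (h1 : KdVSpectralODE lam L φ₁) (h2 : KdVSpectralODE lam L φ₂)
    (hb0 : φ₂ 0 = φ₁ 0)
    (hb1 : (ςNe : ℂ) * iteratedDeriv 2 φ₁ 0 + (ςDi : ℂ) * iteratedDeriv 2 φ₂ 0 = 0)
    (hb2 : φ₁ L = 0) (hb3 : φ₂ L = 0)
    (hb4 : deriv φ₁ 0 = 0) (hb5 : deriv φ₂ 0 = 0)
    (hb6 : deriv φ₁ L = 0) (hb7 : iteratedDeriv 2 φ₂ L = 0)
    (hextra : iteratedDeriv 2 φ₁ L = 0 ∨ iteratedDeriv 2 φ₁ 0 = iteratedDeriv 2 φ₂ 0) :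
    ∀ x ∈ Set.Icc (0 : ℝ) L, φ₁ x = 0 ∧ φ₂ x = 0 := by
  have hL0 : (0:ℝ) ∈ Icc (0:ℝ) L := ⟨le_rfl, hL.le⟩
  have hLL : L ∈ Icc (0:ℝ) L := ⟨hL.le, le_rfl⟩
  have main : iteratedDeriv 2 φ₁ L = 0 → ∀ x ∈ Icc (0:ℝ) L, φ₁ x = 0 ∧ φ₂ x = 0 := by
    intro hA
    have v1 := kdv_vanish lam h1 hLL hb2 hb6 hA
    have h10 := (v1 0 hL0).1
    have h12 := (v1 0 hL0).2.2
    have hφ20 : φ₂ 0 = 0 := hb0.trans h10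
    have hφ22 : iteratedDeriv 2 φ₂ 0 = 0 := by
      rw [h12, mul_zero, zero_add] at hb1
      have hd : (ςDi:ℂ) ≠ 0 := by exact_mod_cast hDi.ne'
      exact (mul_eq_zero.mp hb1).resolve_left hd
    have v2 := kdv_vanish lam h2 hL0 hφ20 hb5 hφ22
    exact fun x hx => ⟨(v1 x hx).1, (v2 x hx).1⟩
  rcases hextra with hA | hB
  · exact main hA
  · have hz2 : iteratedDeriv 2 φ₂ 0 = 0 := by
      rw [hB, ← add_mul] at hb1
      have hd : ((ςNe:ℂ) + ςDi) ≠ 0 := by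
        have : (0:ℝ) < ςNe + ςDi := by linarith
        exact_mod_cast this.ne'
      exact (mul_eq_zero.mp hb1).resolve_left hd
    have hz1 : iteratedDeriv 2 φ₁ 0 = 0 := hB.trans hz2
    have heq := kdv_uniq lam h1 h2 hL0 hb0.symm (hb4.trans hb5.symm) (hz1.trans hz2.symm)
    exact main ((heq L hLL).2.2.trans hb7)
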